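/- Let s, n, m be positive integers and let ℒ = {l₁, l₂, …, l_s} be a set of s nonnegative integers with l₁ < l₂ < … < l_s. Suppose A₁, A₂, …, A_m are pairwise distinct subsets of [n] such that |Aᵢ ∩ Aⱼ| ∈ ℒ for every pair i ≠ j, and let k = max{|Aⱼ| : 1 ≤ j ≤ m}. If n ≥ C(k², l₁+1)·s + l₁, then m ≤ C(n−l₁, s) + C(n−l₁, s−1) + … + C(n−l₁, 0). -/

import Mathlib

open Finset

noncomputable section AuxDFS

variable {α : Type*} [Fintype α] [DecidableEq α]

private def eSet (S : Finset α) : Finset α → ℝ := fun B => if S ⊆ B then 1 else 0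

private def Usp (α : Type*) [Fintype α] [DecidableEq α] (d : ℕ) : Submodule ℝ (Finset α → ℝ) :=
  Submodule.span ℝ (eSet '' {S : Finset α | S.card ≤ d})

private lemma Usp_mono {d d' : ℕ} (h : d ≤ d') : Usp α d ≤ Usp α d' :=
  Submodule.span_mono (Set.image_mono fun _ hS => hS.trans h)

private lemma mul_mem_Usp (C : Finset α) (x : ℝ) {d : ℕ} {f : Finset α → ℝ}
    (hf : f ∈ Usp α d) :
    (fun B => (((C ∩ B).card : ℝ) - x) * f B) ∈ Usp α (d + 1) := by
  induction hf using Submodule.span_induction with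
  | mem g hg =>
    obtain ⟨S, hS, rfl⟩ := hg
    have key : (fun B => (((C ∩ B).card : ℝ) - x) * eSet S B)
        = (∑ a ∈ C, eSet (insert a S)) - x • eSet S := by
      funext B
      simp only [eSet, Finset.sum_apply, Pi.sub_apply, Pi.smul_apply, smul_eq_mul]
      by_cases hSB : S ⊆ B
      · have h1 : ∀ a ∈ C, (if insert a S ⊆ B then (1:ℝ) else 0)
            = if a ∈ B then (1:ℝ) else 0 := by
          intro a _
          simp [insert_subset_iff, hSB]
        rw [Finset.sum_congr rfl h1, Finset.sum_boole, Finset.filter_mem_eq_inter]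
        simp [hSB]
      · have h1 : ∀ a ∈ C, (if insert a S ⊆ B then (1:ℝ) else 0) = 0 := by
          intro a _
          simp only [insert_subset_iff, ite_eq_right_iff, and_imp]
          intro _ h; exact absurd h hSB
        rw [Finset.sum_congr rfl h1]
        simp [hSB]
    rw [key]
    refine Submodule.sub_mem _ (Submodule.sum_mem _ fun a _ => Submodule.subset_span ?_)
      (Submodule.smul_mem _ _ (Submodule.subset_span ⟨S, hS.trans d.le_succ, rfl⟩))
    exact ⟨insert a S, (card_insert_le _ _).trans (Nat.succ_le_succ hS), rfl⟩
  | zero =>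
    have : (fun B => (((C ∩ B).card : ℝ) - x) * (0 : Finset α → ℝ) B) = 0 := by
      funext B; simp
    rw [this]; exact Submodule.zero_mem _
  | add g h _ _ hg hh =>
    have : (fun B => (((C ∩ B).card : ℝ) - x) * (g + h) B)
        = (fun B => (((C ∩ B).card : ℝ) - x) * g B)
          + fun B => (((C ∩ B).card : ℝ) - x) * h B := by
      funext B; simp [mul_add]
    rw [this]; exact Submodule.add_mem _ hg hh
  | smul r g _ hg =>
    have : (fun B => (((C ∩ B).card : ℝ) - x) * (r • g) B)
        = r • fun B => (((C ∩ B).card : ℝ) - x) * g B := by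
      funext B; simp [Pi.smul_apply, smul_eq_mul]; ring
    rw [this]; exact Submodule.smul_mem _ _ hg

private lemma prod_mem_Usp (C : Finset α) (T : Finset ℕ) :
    (fun B => ∏ t ∈ T, (((C ∩ B).card : ℝ) - (t : ℝ))) ∈ Usp α T.card := by
  induction T using Finset.induction with
  | empty =>
    have h0 : eSet (∅ : Finset α) ∈ Usp α 0 :=
      Submodule.subset_span ⟨∅, by simp, rfl⟩
    have he : (fun _ : Finset α => (1 : ℝ)) = eSet (∅ : Finset α) := by
      funext B; simp [eSet]
    simpa [he] using h0
  | @insert t T' ht ih =>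
    have : (fun B => ∏ u ∈ insert t T', (((C ∩ B).card : ℝ) - (u : ℝ)))
        = fun B => (((C ∩ B).card : ℝ) - (t : ℝ)) * ∏ u ∈ T', (((C ∩ B).card : ℝ) - (u : ℝ)) := by
      funext B; rw [Finset.prod_insert ht]
    rw [this, card_insert_of_notMem ht]
    exact mul_mem_Usp _ _ ih

private lemma card_filter_card_le (s : ℕ) :
    (Finset.univ.filter fun S : Finset α => S.card ≤ s).card
      = ∑ j ∈ Finset.range (s + 1), (Fintype.card α).choose j := by
  classical
  have hset : (Finset.univ.filter fun S : Finset α => S.card ≤ s)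
      = (Finset.range (s + 1)).biUnion fun j => Finset.powersetCard j Finset.univ := by
    ext S
    simp [Finset.mem_powersetCard, Nat.lt_succ_iff]
  rw [hset, Finset.card_biUnion]
  · exact Finset.sum_congr rfl fun j _ => by
      rw [Finset.card_powersetCard, Finset.card_univ]
  · intro x _ y _ hxy
    simp only [Finset.disjoint_left, Finset.mem_powersetCard]
    rintro S ⟨_, h1⟩ ⟨_, h2⟩
    exact hxy (by omega)

/-- Deza–Frankl–Singhi / nonmodular Frankl–Wilson bound. -/
private theorem dfs_bound {ι : Type*} [Fintype ι] (s : ℕ) (L : Finset ℕ) (hL : L.card ≤ s)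
    (A : ι → Finset α) (hA : Function.Injective A)
    (h : ∀ i j : ι, i ≠ j → (A i ∩ A j).card ∈ L) :
    Fintype.card ι ≤ ∑ j ∈ Finset.range (s + 1), (Fintype.card α).choose j := by
  classical
  set f : ι → (Finset α → ℝ) :=
    fun i B => ∏ t ∈ L.filter (· < (A i).card), (((A i ∩ B).card : ℝ) - (t : ℝ)) with hf
  have hmem : ∀ i, f i ∈ Usp α s := fun i =>
    Usp_mono ((card_filter_le _ _).trans hL) (prod_mem_Usp _ _)
  have hind : LinearIndependent ℝ f := by
    rw [Fintype.linearIndependent_iff]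
    intro c hc
    by_contra hne
    push_neg at hne
    obtain ⟨i1, hi1⟩ := hne
    have hsupp : (Finset.univ.filter fun i => c i ≠ 0).Nonempty :=
      ⟨i1, by simp [hi1]⟩
    obtain ⟨i₀, hi₀mem, hi₀min⟩ :=
      Finset.exists_min_image _ (fun i => (A i).card) hsupp
    have hci₀ : c i₀ ≠ 0 := (Finset.mem_filter.1 hi₀mem).2
    have heval : (∑ i, c i • f i) (A i₀) = 0 := by rw [hc]; rfl
    rw [Finset.sum_apply] at heval
    have hzero : ∀ i ∈ (Finset.univ : Finset ι), i ≠ i₀ → (c i • f i) (A i₀) = 0 := by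
      intro i _ hii
      by_cases hci : c i = 0
      · simp [hci]
      have himem : i ∈ Finset.univ.filter fun i => c i ≠ 0 := by simp [hci]
      have hcard : (A i₀).card ≤ (A i).card := hi₀min i himem
      have hv : (A i ∩ A i₀).card ∈ L := h i i₀ hii
      have hvlt : (A i ∩ A i₀).card < (A i).card := by
        rcases lt_or_eq_of_le (card_le_card (inter_subset_left : A i ∩ A i₀ ⊆ A i)) with h' | h'
        · exact h'
        · exfalso
          have hsub : A i ⊆ A i₀ := by
            have := Finset.eq_of_subset_of_card_le
              (inter_subset_left : A i ∩ A i₀ ⊆ A i) (le_of_eq h'.symm)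
            rw [← this]; exact inter_subset_right
          have : A i = A i₀ :=
            Finset.eq_of_subset_of_card_le hsub (hcard.trans (le_of_eq rfl))
          exact hii (hA this)
      have : f i (A i₀) = 0 := by
        rw [hf]
        exact Finset.prod_eq_zero (Finset.mem_filter.2 ⟨hv, hvlt⟩) (by simp)
      simp [this]
    rw [Finset.sum_eq_single_of_mem i₀ (Finset.mem_univ _) hzero] at heval
    have hfi₀ : f i₀ (A i₀) ≠ 0 := by
      rw [hf]
      refine Finset.prod_ne_zero_iff.2 fun t ht => ?_
      have htlt : t < (A i₀).card := (Finset.mem_filter.1 ht).2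
      rw [Finset.inter_self]
      have : (t : ℝ) < ((A i₀).card : ℝ) := by exact_mod_cast htlt
      exact sub_ne_zero_of_ne (ne_of_gt this)
    simp only [Pi.smul_apply, smul_eq_mul] at heval
    exact hci₀ (by
      rcases mul_eq_zero.1 heval with h' | h'
      · exact h'
      · exact absurd h' hfi₀)
  -- dimension count
  set G : Finset (Finset α → ℝ) :=
    (Finset.univ.filter fun S : Finset α => S.card ≤ s).image eSet with hG
  have hUG : Usp α s = Submodule.span ℝ (G : Set (Finset α → ℝ)) := by
    unfold Usp
    congr 1
    ext g
    simp [hG, Set.mem_image]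
  have hrank : Module.finrank ℝ ↥(Usp α s) ≤ ∑ j ∈ Finset.range (s + 1), (Fintype.card α).choose j := by
    rw [hUG]
    refine (finrank_span_finset_le_card G).trans ?_
    exact (Finset.card_image_le).trans (le_of_eq (card_filter_card_le s))
  have hcard : Fintype.card ι ≤ Module.finrank ℝ ↥(Usp α s) := by
    have hg : LinearIndependent ℝ (fun i => (⟨f i, hmem i⟩ : ↥(Usp α s))) := by
      refine LinearIndependent.of_comp (Usp α s).subtype ?_
      exact hind
    exact hg.fintype_card_le_finrank
  exact hcard.trans hrank

end AuxDFS


section Restrict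

private theorem restrict_bound {n : ℕ} {ι : Type*} [Fintype ι]
    (s' : ℕ) (L : Finset ℕ) (hL : L.card ≤ s')
    (A : ι → Finset (Fin n)) (hA : Function.Injective A)
    (K : Finset (Fin n)) (hK : ∀ i, K ⊆ A i)
    (h : ∀ i j : ι, i ≠ j → (A i ∩ A j).card - K.card ∈ L) :
    Fintype.card ι ≤ ∑ j ∈ Finset.range (s' + 1), (n - K.card).choose j := by
  classical
  set A' : ι → Finset {x : Fin n // x ∈ Kᶜ} := fun i => (A i).subtype (· ∈ Kᶜ) with hA'
  have hfilter : ∀ (s : Finset (Fin n)), s.filter (· ∈ Kᶜ) = s \ K := by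
    intro s; ext x; simp [Finset.mem_sdiff, and_comm]
  have hinj : Function.Injective A' := by
    intro i j hij
    have h1 : (A i).filter (· ∈ Kᶜ) = (A j).filter (· ∈ Kᶜ) := by
      rw [← Finset.subtype_map (· ∈ Kᶜ) (s := A i), ← Finset.subtype_map (· ∈ Kᶜ) (s := A j)]
      simp only [hA'] at hij
      rw [hij]
    rw [hfilter, hfilter] at h1
    apply hA
    have : ∀ i' : ι, A i' = (A i' \ K) ∪ K := fun i' => by
      rw [Finset.sdiff_union_of_subset (hK i')]
    rw [this i, this j, h1]
  have hint : ∀ i j : ι, (A' i ∩ A' j) = (A i ∩ A j).subtype (· ∈ Kᶜ) := by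
    intro i j; ext x; simp [hA']
  have hcard : ∀ i j : ι, i ≠ j → (A' i ∩ A' j).card ∈ L := by
    intro i j hij
    rw [hint, Finset.card_subtype, hfilter, Finset.card_sdiff_of_subset]
    · exact h i j hij
    · exact Finset.subset_inter (hK i) (hK j)
  have hground : Fintype.card {x : Fin n // x ∈ Kᶜ} = n - K.card := by
    rw [Fintype.card_coe, Finset.card_compl, Fintype.card_fin]
  have := dfs_bound s' L hL A' hinj hcard
  rwa [hground] at this

end Restrict


section Chain

private lemma chain_lemma {n m : ℕ} (A : Fin m → Finset (Fin n)) (j₁ : Fin m) (k l₁ : ℕ)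
    (hk : ∀ i, (A i).card ≤ k)
    (hl : ∀ i : Fin m, i ≠ j₁ → l₁ ≤ (A i ∩ A j₁).card) :
    ∀ (d : ℕ) (T : Finset (Fin m)), j₁ ∈ T → (T.inf A).card ≤ d →
      ∃ T' : Finset (Fin m), T ⊆ T' ∧ (∀ i : Fin m, T'.inf A ⊆ A i) ∧
        (T'.sup A).card ≤ (T.sup A).card + d * (k - l₁) := by
  intro d
  induction d with
  | zero =>
    intro T hj hT
    refine ⟨T, Finset.Subset.rfl, ?_, by simp⟩
    intro i
    have : T.inf A = ∅ := Finset.card_eq_zero.1 (Nat.le_zero.1 hT)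
    rw [this]
    exact Finset.empty_subset _
  | succ d ih =>
    intro T hj hT
    by_cases hall : ∀ i : Fin m, T.inf A ⊆ A i
    · exact ⟨T, Finset.Subset.rfl, hall, Nat.le_add_right _ _⟩
    · push_neg at hall
      obtain ⟨i₀, hi₀⟩ := hall
      have hij₁ : i₀ ≠ j₁ := by
        intro hEq
        exact hi₀ (hEq ▸ Finset.inf_le hj)
      have hinfins : (insert i₀ T).inf A = A i₀ ∩ T.inf A := by
        rw [Finset.inf_insert]; rfl
      have hlt : ((insert i₀ T).inf A).card < (T.inf A).card := by
        apply Finset.card_lt_card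
        rw [hinfins]
        constructor
        · exact Finset.inter_subset_right
        · intro hsub
          exact hi₀ fun x hx => (Finset.mem_inter.1 (hsub hx)).1
      obtain ⟨T', hT1, hT2, hT3⟩ := ih (insert i₀ T) (Finset.mem_insert_of_mem hj)
        (by omega)
      refine ⟨T', (Finset.subset_insert _ _).trans hT1, hT2, ?_⟩
      have hsupins : (insert i₀ T).sup A = A i₀ ∪ T.sup A := by
        rw [Finset.sup_insert]; rfl
      have hstep : ((insert i₀ T).sup A).card ≤ (T.sup A).card + (k - l₁) := by
        rw [hsupins]
        have h1 : A i₀ ∪ T.sup A = T.sup A ∪ (A i₀ \ T.sup A) := by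
          ext x
          simp only [Finset.mem_union, Finset.mem_sdiff]
          tauto
        rw [h1]
        refine (Finset.card_union_le _ _).trans ?_
        refine Nat.add_le_add_left ?_ _
        have h2 : A i₀ \ T.sup A ⊆ A i₀ \ A j₁ :=
          Finset.sdiff_subset_sdiff Finset.Subset.rfl (Finset.le_sup hj)
        refine (Finset.card_le_card h2).trans ?_
        have h3 : A i₀ \ A j₁ = A i₀ \ (A i₀ ∩ A j₁) := by
          rw [Finset.sdiff_inter_self_left]
        rw [h3, Finset.card_sdiff_of_subset Finset.inter_subset_left]
        have := hl i₀ hij₁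
        have := hk i₀
        omega
      calc (T'.sup A).card ≤ ((insert i₀ T).sup A).card + d * (k - l₁) := hT3
        _ ≤ (T.sup A).card + (k - l₁) + d * (k - l₁) := Nat.add_le_add_right hstep _
        _ = (T.sup A).card + (d + 1) * (k - l₁) := by ring

end Chain


/-- **Corollary 1.8.** If `ℒ = {l 0 < ⋯ < l (s-1)}` is a set of `s` nonnegative
integers, `A 1, …, A m` are pairwise distinct subsets of `[n]` whose pairwise
intersections have cardinality in `ℒ`, `k` is the maximum size of a member, and
`n ≥ C(k², l₁+1)·s + l₁`, then `m ≤ C(n-l₁, s) + C(n-l₁, s-1) + ⋯ + C(n-l₁, 0)`. -/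
theorem stmt_1 (s n m : ℕ) (hs : 0 < s) (hn : 0 < n) (hm : 0 < m)
    (l : Fin s → ℕ) (hl : StrictMono l)
    (A : Fin m → Finset (Fin n)) (hA : Function.Injective A)
    (hAL : ∀ i j, i ≠ j → ∃ t, (A i ∩ A j).card = l t)
    (k : ℕ) (hk₁ : ∀ j, (A j).card ≤ k) (hk₂ : ∃ j, (A j).card = k)
    (hbig : n ≥ (k ^ 2).choose (l ⟨0, hs⟩ + 1) * s + l ⟨0, hs⟩) :
    m ≤ ∑ j ∈ Finset.range (s + 1), (n - l ⟨0, hs⟩).choose j := by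
  classical
  set l₁ := l ⟨0, hs⟩ with hl₁def
  set N := n - l₁ with hNdef
  set c := (k ^ 2).choose (l₁ + 1) with hcdef
  have hlow : ∀ i j : Fin m, i ≠ j → l₁ ≤ (A i ∩ A j).card := by
    intro i j hij
    obtain ⟨t, ht⟩ := hAL i j hij
    rw [ht]
    exact hl.monotone (Fin.le_def.mpr (Nat.zero_le _))
  have hone : (1 : ℕ) ≤ ∑ j ∈ Finset.range (s + 1), N.choose j := by
    calc (1 : ℕ) = N.choose 0 := (Nat.choose_zero_right N).symm
      _ ≤ _ := Finset.single_le_sum (f := fun j => N.choose j)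
          (fun _ _ => Nat.zero_le _) (Finset.mem_range.2 (Nat.succ_pos s))
  by_cases hm2 : m ≤ 1
  · omega
  push_neg at hm2
  by_cases hker : l₁ ≤ ((Finset.univ : Finset (Fin m)).inf A).card
  · -- kernel case
    obtain ⟨K, hKsub, hKcard⟩ := Finset.exists_subset_card_eq hker
    have hKin : ∀ i, K ⊆ A i := fun i => hKsub.trans (Finset.inf_le (Finset.mem_univ i))
    have hmem : ∀ i j : Fin m, i ≠ j →
        (A i ∩ A j).card - K.card ∈ Finset.univ.image fun t => l t - l₁ := by
      intro i j hij
      obtain ⟨t, ht⟩ := hAL i j hij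
      rw [ht, hKcard]
      exact Finset.mem_image_of_mem _ (Finset.mem_univ t)
    have hLc : (Finset.univ.image fun t => l t - l₁).card ≤ s := by
      refine Finset.card_image_le.trans ?_
      simp
    have := restrict_bound s _ hLc A hA K hKin hmem
    rwa [hKcard, Fintype.card_fin] at this
  · -- no kernel case
    push_neg at hker
    have hl₁pos : 1 ≤ l₁ := by omega
    set j₁ : Fin m := ⟨0, hm⟩ with hj₁def
    have hklge : l₁ + 1 ≤ k := by
      obtain ⟨i1, hi1⟩ := Fintype.exists_ne_of_one_lt_card
        (by simpa using hm2) j₁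
      by_contra hkl
      push_neg at hkl
      have h1 := hlow i1 j₁ hi1
      have h2 := Finset.card_le_card ((Finset.inter_subset_left : A i1 ∩ A j₁ ⊆ A i1))
      have h3 := hk₁ i1
      have hc1 : (A i1 ∩ A j₁).card = (A i1).card := by omega
      have hi1sub : A i1 ⊆ A j₁ := by
        have heq := Finset.eq_of_subset_of_card_le
          ((Finset.inter_subset_left : A i1 ∩ A j₁ ⊆ A i1)) (le_of_eq hc1.symm)
        rw [← heq]
        exact Finset.inter_subset_right
      have h1' := hlow j₁ i1 (Ne.symm hi1)
      have h2' := Finset.card_le_card ((Finset.inter_subset_left : A j₁ ∩ A i1 ⊆ A j₁))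
      have h3' := hk₁ j₁
      have hc1' : (A j₁ ∩ A i1).card = (A j₁).card := by omega
      have hj₁sub : A j₁ ⊆ A i1 := by
        have heq := Finset.eq_of_subset_of_card_le
          ((Finset.inter_subset_left : A j₁ ∩ A i1 ⊆ A j₁)) (le_of_eq hc1'.symm)
        rw [← heq]
        exact Finset.inter_subset_right
      exact hi1 (hA (Finset.Subset.antisymm hi1sub hj₁sub))
    obtain ⟨T', hTsub, hTinf, hTsup⟩ := chain_lemma A j₁ k l₁ hk₁
      (fun i hi => hlow i j₁ hi) k {j₁} (Finset.mem_singleton_self j₁)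
      (by simpa using hk₁ j₁)
    set W := T'.sup A with hWdef
    have hj₁T : j₁ ∈ T' := hTsub (Finset.mem_singleton_self j₁)
    have hWcard : W.card ≤ k ^ 2 := by
      have h0 : ({j₁} : Finset (Fin m)).sup A = A j₁ := Finset.sup_singleton
      rw [h0] at hTsup
      have h1 := hk₁ j₁
      have h2 : k - l₁ ≤ k - 1 := by omega
      have h3 : k * (k - l₁) ≤ k * (k - 1) := Nat.mul_le_mul_left k h2
      have h4 : k + k * (k - 1) = k * k := by
        cases k with
        | zero => simp
        | succ k' => simp [Nat.succ_sub_one]; ring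
      have h5 : k ^ 2 = k * k := by ring
      omega
    have hWmeet : ∀ i : Fin m, l₁ + 1 ≤ (A i ∩ W).card := by
      intro i
      by_contra hle
      push_neg at hle
      have hle' : (A i ∩ W).card ≤ l₁ := by omega
      by_cases hiT : i ∈ T'
      · have hAiW : A i ⊆ W := Finset.le_sup hiT
        have heqi : A i ∩ W = A i := Finset.inter_eq_left.2 hAiW
        rw [heqi] at hle'
        have hAiA : ∀ j : Fin m, A i ⊆ A j := by
          intro j
          by_cases hji : i = j
          · rw [hji]
          · have h1 := hlow i j hji
            have h2 := Finset.card_le_card ((Finset.inter_subset_left : A i ∩ A j ⊆ A i))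
            have hc1 : (A i ∩ A j).card = (A i).card := by omega
            have heq := Finset.eq_of_subset_of_card_le
              ((Finset.inter_subset_left : A i ∩ A j ⊆ A i)) (le_of_eq hc1.symm)
            rw [← heq]
            exact Finset.inter_subset_right
        have hsub : A i ≤ (Finset.univ : Finset (Fin m)).inf A :=
          Finset.le_inf fun j _ => hAiA j
        obtain ⟨i', hi'⟩ := Fintype.exists_ne_of_one_lt_card (by simpa using hm2) i
        have h1 := hlow i i' (Ne.symm hi')
        have h2 := Finset.card_le_card ((Finset.inter_subset_left : A i ∩ A i' ⊆ A i))
        have h3 := Finset.card_le_card hsub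
        omega
      · have hAll : ∀ t ∈ T', A i ∩ A t = A i ∩ W := by
          intro t htT
          have hne : i ≠ t := fun h => hiT (h ▸ htT)
          apply Finset.eq_of_subset_of_card_le
          · exact Finset.inter_subset_inter Finset.Subset.rfl (Finset.le_sup htT)
          · have := hlow i t hne
            omega
        have hsub : A i ∩ W ≤ T'.inf A := by
          refine Finset.le_inf fun t htT => ?_
          rw [← hAll t htT]
          exact Finset.inter_subset_right
        have hsub2 : T'.inf A ≤ (Finset.univ : Finset (Fin m)).inf A :=
          Finset.le_inf fun j _ => hTinf j
        have hne : i ≠ j₁ := fun h => hiT (h ▸ hj₁T)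
        have h1 := hlow i j₁ hne
        have h2 := hAll j₁ hj₁T
        have h3 := Finset.card_le_card (hsub.trans hsub2)
        rw [h2] at h1
        omega
    have hchoice : ∀ i : Fin m, ∃ S, S ⊆ A i ∩ W ∧ S.card = l₁ + 1 := by
      intro i
      obtain ⟨S, h1, h2⟩ := Finset.exists_subset_card_eq (hWmeet i)
      exact ⟨S, h1, h2⟩
    choose σ hσ1 hσ2 using hchoice
    set P := Finset.powersetCard (l₁ + 1) W with hPdef
    have hmap : ∀ i ∈ (Finset.univ : Finset (Fin m)), σ i ∈ P := by
      intro i _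
      rw [hPdef, Finset.mem_powersetCard]
      exact ⟨(hσ1 i).trans Finset.inter_subset_right, hσ2 i⟩
    have hcount : m = ∑ S ∈ P, (Finset.univ.filter fun i => σ i = S).card := by
      rw [← Finset.card_eq_sum_card_fiberwise hmap, Finset.card_univ, Fintype.card_fin]
    set B₁ := ∑ j ∈ Finset.range s, (N - 1).choose j with hB₁def
    have hfiber : ∀ S ∈ P, (Finset.univ.filter fun i => σ i = S).card ≤ B₁ := by
      intro S hSP
      have hScard : S.card = l₁ + 1 := (Finset.mem_powersetCard.1 hSP).2
      set Mf := Finset.univ.filter fun i => σ i = S with hMfdef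
      have hSsub : ∀ i : Fin m, i ∈ Mf → S ⊆ A i := by
        intro i hi
        have hσi : σ i = S := (Finset.mem_filter.1 hi).2
        exact hσi ▸ (hσ1 i).trans Finset.inter_subset_left
      set L'' := ((Finset.univ.image l).erase l₁).image (fun v => v - (l₁ + 1)) with hL''def
      have hL''card : L''.card ≤ s - 1 := by
        refine Finset.card_image_le.trans ?_
        rw [Finset.card_erase_of_mem (Finset.mem_image_of_mem l (Finset.mem_univ ⟨0, hs⟩))]
        rw [Finset.card_image_of_injective _ hl.injective, Finset.card_univ, Fintype.card_fin]
      have hmem : ∀ i j : {x : Fin m // x ∈ Mf}, i ≠ j →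
          (A i.1 ∩ A j.1).card - S.card ∈ L'' := by
        intro i j hij
        have hne : i.1 ≠ j.1 := fun h => hij (Subtype.ext h)
        obtain ⟨t, ht⟩ := hAL i.1 j.1 hne
        have hge : l₁ + 1 ≤ (A i.1 ∩ A j.1).card := by
          have hsub : S ⊆ A i.1 ∩ A j.1 :=
            Finset.subset_inter (hSsub i.1 i.2) (hSsub j.1 j.2)
          calc l₁ + 1 = S.card := hScard.symm
            _ ≤ _ := Finset.card_le_card hsub
        rw [ht, hScard]
        refine Finset.mem_image.2 ⟨l t, ?_, rfl⟩
        refine Finset.mem_erase.2 ⟨?_, Finset.mem_image_of_mem l (Finset.mem_univ t)⟩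
        rw [ht] at hge
        omega
      have hrb := restrict_bound (s - 1) L'' hL''card (fun i : {x : Fin m // x ∈ Mf} => A i.1)
        (hA.comp Subtype.val_injective) S (fun i => hSsub i.1 i.2) hmem
      rw [Fintype.card_coe] at hrb
      have heq1 : s - 1 + 1 = s := Nat.sub_add_cancel hs
      have heq2 : n - S.card = N - 1 := by rw [hScard, hNdef]; omega
      rw [heq1, heq2] at hrb
      exact hrb
    have hPc : P.card ≤ c := by
      rw [hPdef, Finset.card_powersetCard]
      exact Nat.choose_le_choose (l₁ + 1) hWcard
    have htot : m ≤ c * B₁ := by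
      rw [hcount]
      calc ∑ S ∈ P, (Finset.univ.filter fun i => σ i = S).card
          ≤ ∑ _S ∈ P, B₁ := Finset.sum_le_sum hfiber
        _ = P.card * B₁ := by rw [Finset.sum_const, smul_eq_mul]
        _ ≤ c * B₁ := Nat.mul_le_mul_right _ hPc
    have hNge : c * s ≤ N := by
      rw [hNdef]
      omega
    have hcpos : 1 ≤ c := by
      rw [hcdef]
      exact Nat.choose_pos (hklge.trans (by nlinarith))
    have hNpos : 1 ≤ N := le_trans (Nat.one_le_iff_ne_zero.2 (by positivity)) hNge
    have hterm : ∀ j ∈ Finset.range s, c * (N - 1).choose j ≤ N.choose (j + 1) := by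
      intro j hj
      rw [Finset.mem_range] at hj
      have hid : N * (N - 1).choose j = N.choose (j + 1) * (j + 1) := by
        have h := Nat.add_one_mul_choose_eq (N - 1) j
        rwa [show N - 1 + 1 = N by omega] at h
      have h1 : c * (j + 1) ≤ N := by
        refine le_trans ?_ hNge
        exact Nat.mul_le_mul_left c hj
      have h2 : c * (N - 1).choose j * (j + 1) ≤ N.choose (j + 1) * (j + 1) := by
        calc c * (N - 1).choose j * (j + 1) = (c * (j + 1)) * (N - 1).choose j := by ring
          _ ≤ N * (N - 1).choose j := Nat.mul_le_mul_right _ h1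
          _ = N.choose (j + 1) * (j + 1) := hid
      exact Nat.le_of_mul_le_mul_right h2 (Nat.succ_pos j)
    calc m ≤ c * B₁ := htot
      _ = ∑ j ∈ Finset.range s, c * (N - 1).choose j := by
          rw [hB₁def, Finset.mul_sum]
      _ ≤ ∑ j ∈ Finset.range s, N.choose (j + 1) := Finset.sum_le_sum hterm
      _ ≤ ∑ j ∈ Finset.range (s + 1), N.choose j := by
          rw [Finset.sum_range_succ']
          exact Nat.le_add_right _ _
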